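/- Let q_1, …, q_n be positive integers with Σ_{i=1}^n q_i = 2B, and consider the single-commodity instance G formed by connecting n two-link stages in series, where stage i consists of a top edge with constant latency q_i and a bottom edge with latency q_i·x, with unit demand routed across. The edge flow o routing 1/2 on every edge is socially optimal, and the following are equivalent: (i) there exists I ⊆ {1,…,n} with Σ_{i∈I} q_i = B; (ii) o admits a path-flow decomposition that is 1-EF; (iii) o admits a path-flow decomposition that is a (3/2)-UNE. -/

import Mathlib

open scoped BigOperators

/-- A routing instance: a finite directed (multi)graph given by source/target maps
on edges, a finite set of commodities with sources, sinks, demands, and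
load-dependent latency functions on edges. -/
structure RoutingInstance (V E K : Type*) where
  src : E → V
  tgt : E → V
  source : K → V
  sink : K → V
  demand : K → ℝ
  latency : E → ℝ → ℝ

namespace RoutingInstance

variable {V E K : Type*} [Fintype V] [Fintype E] [Fintype K] [DecidableEq E]

/-- Standard assumptions: positive demands, latencies nonnegative and
nondecreasing on `[0, ∞)`. -/
def Standard (G : RoutingInstance V E K) : Prop :=
  (∀ k, 0 < G.demand k) ∧
  (∀ e x, (0:ℝ) ≤ x → 0 ≤ G.latency e x) ∧
  (∀ e, MonotoneOn (G.latency e) (Set.Ici (0:ℝ)))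

/-- `G.IsWalkFrom s t l` : the list of edges `l` is a directed walk from `s` to `t`. -/
def IsWalkFrom (G : RoutingInstance V E K) : V → V → List E → Prop
  | s, t, [] => s = t
  | s, t, e :: es => G.src e = s ∧ IsWalkFrom G (G.tgt e) t es

/-- The list of vertices visited by a walk starting at `s`. -/
def walkVerts (G : RoutingInstance V E K) (s : V) (l : List E) : List V :=
  s :: l.map G.tgt

/-- A simple directed path from the source of commodity `k` to its sink. -/
def IsPathOf (G : RoutingInstance V E K) (k : K) (p : List E) : Prop :=
  G.IsWalkFrom (G.source k) (G.sink k) p ∧ (G.walkVerts (G.source k) p).Nodup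

/-- A feasible path flow: nonnegative, supported on simple `s_k`-`t_k` paths,
and routing the whole demand of each commodity. -/
def Feasible (G : RoutingInstance V E K) (f : K → (List E →₀ ℝ)) : Prop :=
  (∀ k p, 0 ≤ f k p) ∧
  (∀ k p, f k p ≠ 0 → G.IsPathOf k p) ∧
  (∀ k, ((f k).sum fun _ v => v) = G.demand k)

/-- Edge flow of commodity `k` induced by a path flow. -/
def edgeFlowK (G : RoutingInstance V E K) (f : K → (List E →₀ ℝ)) (k : K) (e : E) : ℝ :=
  (f k).sum fun p v => if e ∈ p then v else 0

/-- Total edge flow induced by a path flow. -/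
def edgeFlow (G : RoutingInstance V E K) (f : K → (List E →₀ ℝ)) (e : E) : ℝ :=
  ∑ k, G.edgeFlowK f k e

/-- Latency (cost) of a path under the edge flows induced by the path flow `f`. -/
def pathCost (G : RoutingInstance V E K) (f : K → (List E →₀ ℝ)) (p : List E) : ℝ :=
  (p.map fun e => G.latency e (G.edgeFlow f e)).sum

/-- A path is used by commodity `k` if it carries positive flow in `f`. -/
def Used (G : RoutingInstance V E K) (f : K → (List E →₀ ℝ)) (k : K) (p : List E) : Prop :=
  0 < f k p

/-- A path is positive for commodity `k` if each of its edges carries positive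
commodity-`k` flow. -/
def PositivePath (G : RoutingInstance V E K) (f : K → (List E →₀ ℝ)) (k : K) (p : List E) :
    Prop :=
  G.IsPathOf k p ∧ ∀ e ∈ p, 0 < G.edgeFlowK f k e

/-- θ-Positive Nash Equilibrium (a property of the induced edge flow):
every positive path costs at most θ times any path of the same commodity. -/
def IsPNE (G : RoutingInstance V E K) (θ : ℝ) (f : K → (List E →₀ ℝ)) : Prop :=
  ∀ k p q, G.PositivePath f k p → G.IsPathOf k q →
    G.pathCost f p ≤ θ * G.pathCost f q

/-- θ-Used Nash Equilibrium: every used path costs at most θ times any path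
of the same commodity. -/
def IsUNE (G : RoutingInstance V E K) (θ : ℝ) (f : K → (List E →₀ ℝ)) : Prop :=
  ∀ k p q, G.Used f k p → G.IsPathOf k q →
    G.pathCost f p ≤ θ * G.pathCost f q

/-- θ-Envy Free: every used path costs at most θ times any used path
of the same commodity. -/
def IsEF (G : RoutingInstance V E K) (θ : ℝ) (f : K → (List E →₀ ℝ)) : Prop :=
  ∀ k p q, G.Used f k p → G.Used f k q →
    G.pathCost f p ≤ θ * G.pathCost f q

/-- Social cost of a path flow. -/
def socialCost (G : RoutingInstance V E K) (f : K → (List E →₀ ℝ)) : ℝ :=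
  ∑ e, G.edgeFlow f e * G.latency e (G.edgeFlow f e)

end RoutingInstance
namespace Stmt14Aux
open RoutingInstance

variable {n : ℕ}

def pathOf (n : ℕ) (b : Fin n → Bool) : List (Fin n × Bool) :=
  List.ofFn fun i => (i, b i)

lemma mem_pathOf {b : Fin n → Bool} {e : Fin n × Bool} :
    e ∈ pathOf n b ↔ b e.1 = e.2 := by
  constructor
  · intro h
    obtain ⟨i, hi⟩ := List.mem_ofFn.mp h
    obtain ⟨rfl, h2⟩ : i = e.1 ∧ b i = e.2 := by
      refine ⟨congrArg Prod.fst hi, congrArg Prod.snd hi⟩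
    exact h2
  · intro h
    refine List.mem_ofFn.mpr ⟨e.1, ?_⟩
    show (e.1, b e.1) = e
    rw [h]

lemma pathOf_inj {b c : Fin n → Bool} (h : pathOf n b = pathOf n c) : b = c := by
  have := List.ofFn_inj.mp h
  funext i
  exact congrArg Prod.snd (congrFun this i)

lemma walk_iff (G : RoutingInstance (Fin (n+1)) (Fin n × Bool) Unit)
    (hsrc : ∀ e : Fin n × Bool, G.src e = e.1.castSucc)
    (htgt : ∀ e : Fin n × Bool, G.tgt e = e.1.succ) :
    ∀ (p : List (Fin n × Bool)) (k : ℕ) (hk : k ≤ n),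
      (G.IsWalkFrom ⟨k, Nat.lt_succ_of_le hk⟩ (Fin.last n) p ↔
      ∃ b : Fin n → Bool, p = ((List.finRange n).drop k).map fun i => (i, b i)) := by
  intro p
  induction p with
  | nil =>
    intro k hk
    simp only [IsWalkFrom]
    constructor
    · intro h
      have : k = n := by
        have := congrArg Fin.val h
        simpa using this
      subst this
      exact ⟨fun _ => true, by simp⟩
    · rintro ⟨b, hb⟩
      have : (List.finRange n).drop k = [] := by
        rcases List.eq_nil_or_concat ((List.finRange n).drop k) with h | ⟨l, a, h⟩
        · exact h
        · rw [h] at hb; simp at hb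
      have hlen : n - k = 0 := by
        have := congrArg List.length this
        simpa using this
      have : k = n := by omega
      subst this
      rfl
  | cons e es ih =>
    intro k hk
    simp only [IsWalkFrom]
    constructor
    · rintro ⟨h1, h2⟩
      rw [hsrc] at h1
      have hke : (e.1 : ℕ) = k := by
        have := congrArg Fin.val h1
        simpa using this
      have hkn : k < n := hke ▸ e.1.isLt
      rw [htgt] at h2
      have h2' : G.IsWalkFrom ⟨k+1, Nat.lt_succ_of_le hkn⟩ (Fin.last n) es := by
        have : (e.1.succ : Fin (n+1)) = ⟨k+1, Nat.lt_succ_of_le hkn⟩ :=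
          Fin.val_injective (by simp [hke])
        rwa [this] at h2
      obtain ⟨b, hb⟩ := (ih (k+1) hkn).mp h2'
      refine ⟨Function.update b ⟨k, hkn⟩ e.2, ?_⟩
      have hdrop : (List.finRange n).drop k = ⟨k, hkn⟩ :: (List.finRange n).drop (k+1) := by
        rw [List.drop_eq_getElem_cons (by simpa using hkn)]
        congr 1
        simp [List.getElem_finRange, Fin.cast]
      rw [hdrop]
      simp only [List.map_cons]
      have hnotmem : (⟨k, hkn⟩ : Fin n) ∉ (List.finRange n).drop (k+1) := by
        have hnd : ((List.finRange n).drop k).Nodup :=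
          (List.nodup_finRange n).sublist (List.drop_sublist _ _)
        rw [hdrop] at hnd
        exact (List.nodup_cons.mp hnd).1
      have he1 : e.1 = ⟨k, hkn⟩ := Fin.val_injective hke
      congr 1
      · rw [Function.update_self]
        exact Prod.ext he1 rfl
      · rw [hb]
        apply List.map_congr_left
        intro i hi
        have : i ≠ ⟨k, hkn⟩ := fun h => hnotmem (h ▸ hi)
        simp [Function.update_of_ne this]
    · rintro ⟨b, hb⟩
      have hne : (List.finRange n).drop k ≠ [] := by
        intro h
        rw [h] at hb; simp at hb
      have hkn : k < n := by
        by_contra h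
        exact hne (List.drop_eq_nil_of_le (by simpa using not_lt.mp h))
      have hdrop : (List.finRange n).drop k = ⟨k, hkn⟩ :: (List.finRange n).drop (k+1) := by
        rw [List.drop_eq_getElem_cons (by simpa using hkn)]
        congr 1
        simp [List.getElem_finRange, Fin.cast]
      rw [hdrop] at hb
      simp only [List.map_cons, List.cons.injEq] at hb
      obtain ⟨rfl, hb2⟩ := hb
      refine ⟨by rw [hsrc]; exact Fin.val_injective (by simp), ?_⟩
      rw [htgt]
      have : ((⟨k, hkn⟩ : Fin n).succ : Fin (n+1)) = ⟨k+1, Nat.lt_succ_of_le hkn⟩ := by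
        ext; simp
      rw [this]
      exact (ih (k+1) hkn).mpr ⟨b, hb2⟩

lemma isPathOf_iff (G : RoutingInstance (Fin (n+1)) (Fin n × Bool) Unit)
    (hsrc : ∀ e : Fin n × Bool, G.src e = e.1.castSucc)
    (htgt : ∀ e : Fin n × Bool, G.tgt e = e.1.succ)
    (hsource : G.source () = 0) (hsink : G.sink () = Fin.last n)
    (p : List (Fin n × Bool)) :
    G.IsPathOf () p ↔ ∃ b : Fin n → Bool, p = pathOf n b := by
  have h0 : (0 : Fin (n+1)) = ⟨0, Nat.lt_succ_of_le (Nat.zero_le n)⟩ := rfl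
  constructor
  · rintro ⟨hwalk, _⟩
    rw [hsource, hsink, h0] at hwalk
    obtain ⟨b, hb⟩ := (walk_iff G hsrc htgt p 0 (Nat.zero_le n)).mp hwalk
    exact ⟨b, by simpa [pathOf, List.ofFn_eq_map] using hb⟩
  · rintro ⟨b, rfl⟩
    constructor
    · rw [hsource, hsink, h0]
      exact (walk_iff G hsrc htgt _ 0 (Nat.zero_le n)).mpr
        ⟨b, by simp [pathOf, List.ofFn_eq_map]⟩
    · unfold walkVerts
      rw [pathOf, List.map_ofFn]
      have : (G.tgt ∘ fun i => (i, b i)) = fun i : Fin n => (i.succ : Fin (n+1)) := by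
        funext i; simp [htgt]
      rw [this]
      refine List.nodup_cons.mpr ⟨?_, ?_⟩
      · intro h
        obtain ⟨i, hi⟩ := List.mem_ofFn.mp h
        rw [hsource] at hi
        exact (Fin.succ_ne_zero i) hi
      · exact List.nodup_ofFn.mpr (fun i j h => Fin.succ_injective _ h)

end Stmt14Aux

namespace Stmt14Aux
open RoutingInstance

variable {n : ℕ}

/-- The complementary-pair flow: half on `pathOf b`, half on `pathOf !b`. -/
noncomputable def flowOf (n : ℕ) (b : Fin n → Bool) :
    Unit → (List (Fin n × Bool) →₀ ℝ) :=
  fun _ => Finsupp.single (pathOf n b) (1/2)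
    + Finsupp.single (pathOf n fun i => !(b i)) (1/2)

lemma pathOf_ne (hn : 0 < n) (b : Fin n → Bool) :
    pathOf n b ≠ pathOf n (fun i => !(b i)) := by
  intro h
  have := congrFun (pathOf_inj h) ⟨0, hn⟩
  simp at this

lemma flowOf_apply (b : Fin n → Bool) (p : List (Fin n × Bool)) :
    flowOf n b () p = (if p = pathOf n b then 1/2 else 0)
      + (if p = pathOf n (fun i => !(b i)) then 1/2 else 0) := by
  simp [flowOf, Finsupp.single_apply, eq_comm]

lemma flowOf_support (hn : 0 < n) (b : Fin n → Bool) (p : List (Fin n × Bool))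
    (hp : flowOf n b () p ≠ 0) :
    p = pathOf n b ∨ p = pathOf n (fun i => !(b i)) := by
  by_contra h
  push_neg at h
  rw [flowOf_apply, if_neg h.1, if_neg h.2] at hp
  simp at hp

lemma flowOf_nonneg (b : Fin n → Bool) (p : List (Fin n × Bool)) :
    0 ≤ flowOf n b () p := by
  rw [flowOf_apply]; positivity

lemma flowOf_sum (hn : 0 < n) (b : Fin n → Bool) :
    ((flowOf n b ()).sum fun _ v => v) = (1:ℝ) := by
  simp only [flowOf]
  rw [Finsupp.sum_add_index' (fun _ => rfl) (fun _ _ _ => rfl),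
    Finsupp.sum_single_index rfl, Finsupp.sum_single_index rfl]
  norm_num

section WithG
variable (G : RoutingInstance (Fin (n+1)) (Fin n × Bool) Unit)

lemma edgeFlow_eq_K (f : Unit → (List (Fin n × Bool) →₀ ℝ)) (e : Fin n × Bool) :
    G.edgeFlow f e = G.edgeFlowK f () e := by
  rw [RoutingInstance.edgeFlow, Fintype.sum_unique]

lemma edgeFlow_flowOf (hn : 0 < n) (b : Fin n → Bool) (e : Fin n × Bool) :
    G.edgeFlow (flowOf n b) e = 1/2 := by
  rw [edgeFlow_eq_K, RoutingInstance.edgeFlowK]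
  simp only [flowOf]
  rw [Finsupp.sum_add_index' (fun _ => by simp) (fun a b₁ b₂ => by split <;> simp),
    Finsupp.sum_single_index (by simp), Finsupp.sum_single_index (by simp)]
  obtain ⟨e1, e2⟩ := e
  cases hbe : b e1 <;> cases e2 <;>
    simp [mem_pathOf (e := (e1, _)), hbe] <;> norm_num

lemma feasible_flowOf (hn : 0 < n)
    (hsrc : ∀ e : Fin n × Bool, G.src e = e.1.castSucc)
    (htgt : ∀ e : Fin n × Bool, G.tgt e = e.1.succ)
    (hsource : G.source () = 0) (hsink : G.sink () = Fin.last n)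
    (hdemand : G.demand () = 1) (b : Fin n → Bool) :
    G.Feasible (flowOf n b) := by
  refine ⟨fun k p => flowOf_nonneg b p, fun k p hp => ?_, fun k => ?_⟩
  · rcases flowOf_support hn b p hp with h | h <;>
      exact (isPathOf_iff G hsrc htgt hsource hsink p).mpr ⟨_, h⟩
  · rw [flowOf_sum hn, hdemand]

/-- Path cost of `pathOf c` when all edge flows are 1/2. -/
lemma pathCost_pathOf (f : Unit → (List (Fin n × Bool) →₀ ℝ))
    (hflow : ∀ e, G.edgeFlow f e = 1/2) (c : Fin n → Bool) :
    G.pathCost f (pathOf n c) = ∑ i : Fin n, G.latency (i, c i) (1/2) := by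
  rw [RoutingInstance.pathCost, pathOf, List.map_ofFn, List.sum_ofFn]
  refine Finset.sum_congr rfl fun i _ => ?_
  simp [Function.comp, hflow]

end WithG
end Stmt14Aux

namespace Stmt14Aux
open RoutingInstance

variable {n : ℕ} (G : RoutingInstance (Fin (n+1)) (Fin n × Bool) Unit)

lemma edgeFlow_nonneg (f : Unit → (List (Fin n × Bool) →₀ ℝ))
    (hf : G.Feasible f) (e : Fin n × Bool) : 0 ≤ G.edgeFlow f e := by
  rw [edgeFlow_eq_K, RoutingInstance.edgeFlowK, Finsupp.sum]
  refine Finset.sum_nonneg fun p _ => ?_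
  split
  · exact hf.1 () p
  · exact le_refl 0

lemma stage_conservation (f : Unit → (List (Fin n × Bool) →₀ ℝ))
    (hf : G.Feasible f)
    (hsrc : ∀ e : Fin n × Bool, G.src e = e.1.castSucc)
    (htgt : ∀ e : Fin n × Bool, G.tgt e = e.1.succ)
    (hsource : G.source () = 0) (hsink : G.sink () = Fin.last n)
    (hdemand : G.demand () = 1) (i : Fin n) :
    G.edgeFlow f (i, true) + G.edgeFlow f (i, false) = 1 := by
  rw [edgeFlow_eq_K, edgeFlow_eq_K, RoutingInstance.edgeFlowK,
    RoutingInstance.edgeFlowK, Finsupp.sum, Finsupp.sum, ← Finset.sum_add_distrib]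
  have hsum1 := hf.2.2 ()
  rw [Finsupp.sum, hdemand] at hsum1
  rw [← hsum1]
  refine Finset.sum_congr rfl fun p hp => ?_
  obtain ⟨b, rfl⟩ := (isPathOf_iff G hsrc htgt hsource hsink p).mp
    (hf.2.1 () p (Finsupp.mem_support_iff.mp hp))
  cases hbi : b i <;>
    simp [mem_pathOf (e := (i, true)), mem_pathOf (e := (i, false)), hbi]

/-- Weighted path-cost identity: total cost paid equals social cost. -/
lemma weighted_cost (f : Unit → (List (Fin n × Bool) →₀ ℝ))
    (hf : G.Feasible f)
    (hsrc : ∀ e : Fin n × Bool, G.src e = e.1.castSucc)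
    (htgt : ∀ e : Fin n × Bool, G.tgt e = e.1.succ)
    (hsource : G.source () = 0) (hsink : G.sink () = Fin.last n)
    (hflow : ∀ e, G.edgeFlow f e = 1/2) :
    ((f ()).sum fun p v => v * G.pathCost f p)
      = ∑ e : Fin n × Bool, G.latency e (1/2) * (1/2) := by
  rw [Finsupp.sum]
  symm
  have step1 : ∀ e ∈ (Finset.univ : Finset (Fin n × Bool)),
      G.latency e (1/2) * (1/2) = G.latency e (1/2) * G.edgeFlowK f () e := by
    intro e _
    rw [← edgeFlow_eq_K, hflow]
  rw [Finset.sum_congr rfl step1]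
  simp only [RoutingInstance.edgeFlowK, Finsupp.sum, Finset.mul_sum]
  rw [Finset.sum_comm]
  refine Finset.sum_congr rfl fun p hp => ?_
  obtain ⟨b, rfl⟩ := (isPathOf_iff G hsrc htgt hsource hsink p).mp
    (hf.2.1 () p (Finsupp.mem_support_iff.mp hp))
  rw [pathCost_pathOf G f hflow b, Finset.mul_sum, Fintype.sum_prod_type]
  refine Finset.sum_congr rfl fun i _ => ?_
  rw [Fintype.sum_bool]
  cases hbi : b i <;>
    simp [mem_pathOf (e := (i, true)), mem_pathOf (e := (i, false)), hbi, mul_comm]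

end Stmt14Aux

open RoutingInstance in
/-- For the n-stage series network built from positive integers
q_1, …, q_n with Σ q_i = 2B (stage i: top edge of constant latency q_i, bottom edge
of latency q_i·x) and unit demand, the edge flow o routing 1/2 on every edge is
socially optimal, and: there is I with Σ_{i∈I} q_i = B  ⟺  o admits a 1-EF path-flow
decomposition  ⟺  o admits a (3/2)-UNE path-flow decomposition. -/
theorem stmt_14 (n B : ℕ) (hn : 0 < n)
    (q : Fin n → ℕ) (hq : ∀ i, 0 < q i) (hsum : ∑ i, q i = 2 * B)
    (G : RoutingInstance (Fin (n + 1)) (Fin n × Bool) Unit)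
    (hsrc : ∀ e : Fin n × Bool, G.src e = e.1.castSucc)
    (htgt : ∀ e : Fin n × Bool, G.tgt e = e.1.succ)
    (hsource : G.source () = 0)
    (hsink : G.sink () = Fin.last n)
    (hdemand : G.demand () = 1)
    (hlatTop : ∀ (i : Fin n) (x : ℝ), G.latency (i, true) x = (q i : ℝ))
    (hlatBot : ∀ (i : Fin n) (x : ℝ), 0 ≤ x → G.latency (i, false) x = (q i : ℝ) * x) :
    (∃ f₀ : Unit → (List (Fin n × Bool) →₀ ℝ), G.Feasible f₀ ∧
      (∀ e, G.edgeFlow f₀ e = 1 / 2) ∧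
      ∀ g : Unit → (List (Fin n × Bool) →₀ ℝ), G.Feasible g →
        G.socialCost f₀ ≤ G.socialCost g) ∧
    ((∃ I : Finset (Fin n), ∑ i ∈ I, q i = B) ↔
      (∃ f : Unit → (List (Fin n × Bool) →₀ ℝ), G.Feasible f ∧
        (∀ e, G.edgeFlow f e = 1 / 2) ∧ G.IsEF 1 f)) ∧
    ((∃ I : Finset (Fin n), ∑ i ∈ I, q i = B) ↔
      (∃ f : Unit → (List (Fin n × Bool) →₀ ℝ), G.Feasible f ∧
        (∀ e, G.edgeFlow f e = 1 / 2) ∧ G.IsUNE (3/2) f)) := by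

  classical
  open Stmt14Aux in
  have hpath : ∀ p, G.IsPathOf () p ↔ ∃ b : Fin n → Bool, p = pathOf n b :=
    fun p => isPathOf_iff G hsrc htgt hsource hsink p
  have hqsum : (∑ i : Fin n, (q i : ℝ)) = 2 * B := by exact_mod_cast congrArg Nat.cast hsum
  have hB1 : 1 ≤ B := by
    have h1 : 0 < ∑ i, q i :=
      Finset.sum_pos (fun i _ => hq i) ⟨⟨0, hn⟩, Finset.mem_univ _⟩
    omega
  have hlat_half : ∀ (i : Fin n) (c : Bool),
      G.latency (i, c) (1/2) = if c then (q i : ℝ) else (q i : ℝ)/2 := by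
    intro i c
    cases c
    · rw [hlatBot i (1/2) (by norm_num)]; norm_num; ring
    · rw [hlatTop]; norm_num
  have hsc : (∑ e : Fin n × Bool, G.latency e (1/2) * (1/2)) = 3*B/2 := by
    rw [Fintype.sum_prod_type]
    have h1 : ∀ i : Fin n,
        (∑ c : Bool, G.latency (i, c) (1/2) * (1/2)) = (3:ℝ)/4 * q i := by
      intro i
      rw [Fintype.sum_bool, hlat_half i true, hlat_half i false]
      simp; ring
    rw [Finset.sum_congr rfl fun i _ => h1 i, ← Finset.mul_sum, hqsum]; ring
  have hcost : ∀ (f : Unit → (List (Fin n × Bool) →₀ ℝ)),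
      (∀ e, G.edgeFlow f e = 1/2) → ∀ c : Fin n → Bool,
      G.pathCost f (pathOf n c)
        = B + (∑ i ∈ Finset.univ.filter fun i => c i = true, (q i : ℝ)) / 2 := by
    intro f hflow c
    rw [pathCost_pathOf G f hflow c, Finset.sum_filter]
    have h2 : ∀ i : Fin n, G.latency (i, c i) (1/2)
        = (q i : ℝ)/2 + (if c i = true then (q i : ℝ) else 0)/2 := by
      intro i
      rw [hlat_half i (c i)]
      cases hci : c i <;> simp <;> ring
    rw [Finset.sum_congr rfl fun i _ => h2 i, Finset.sum_add_distrib]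
    rw [← Finset.sum_div, ← Finset.sum_div, hqsum]
    ring
  have hused : ∀ (f : Unit → (List (Fin n × Bool) →₀ ℝ)), G.Feasible f →
      ∀ p, f () p ≠ 0 → G.Used f () p := by
    intro f hf p h
    exact lt_of_le_of_ne (hf.1 () p) (Ne.symm h)
  -- the canonical half-half flow associated to a bool selector
  have hflowpack : ∀ b : Fin n → Bool, G.Feasible (flowOf n b) ∧
      (∀ e, G.edgeFlow (flowOf n b) e = 1/2) := by
    intro b
    exact ⟨feasible_flowOf G hn hsrc htgt hsource hsink hdemand b,
      fun e => edgeFlow_flowOf G hn b e⟩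
  -- cost of every used path of `flowOf b` in terms of the two filters
  have hSnonneg : ∀ c : Fin n → Bool,
      (0:ℝ) ≤ ∑ i ∈ Finset.univ.filter fun i => c i = true, (q i : ℝ) := by
    intro c
    exact Finset.sum_nonneg fun i _ => by positivity
  -- ================= direction (i) → flows =================
  have main_dir : ∀ I : Finset (Fin n), (∑ i ∈ I, q i = B) →
      ∃ f : Unit → (List (Fin n × Bool) →₀ ℝ), G.Feasible f ∧
        (∀ e, G.edgeFlow f e = 1/2) ∧
        (∀ p, G.Used f () p → G.pathCost f p = 3*B/2) := by
    intro I hI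
    set b : Fin n → Bool := fun i => decide (i ∈ I) with hb
    obtain ⟨hfeas, hflow⟩ := hflowpack b
    refine ⟨flowOf n b, hfeas, hflow, ?_⟩
    intro p hp
    have hp0 : flowOf n b () p ≠ 0 := ne_of_gt hp
    have hIR : (∑ i ∈ I, (q i : ℝ)) = B := by exact_mod_cast congrArg Nat.cast hI
    have hfilt1 : (Finset.univ.filter fun i => b i = true) = I := by
      ext i; simp [hb]
    have hfilt2 : (Finset.univ.filter fun i => (!(b i)) = true) = Iᶜ := by
      ext i; simp [hb]
    have hIcR : (∑ i ∈ Iᶜ, (q i : ℝ)) = B := by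
      have := Finset.sum_add_sum_compl I fun i => (q i : ℝ)
      rw [hIR, hqsum] at this
      linarith
    rcases flowOf_support hn b p hp0 with rfl | rfl
    · rw [hcost _ hflow, hfilt1, hIR]; ring
    · rw [hcost _ hflow, hfilt2, hIcR]; ring
  -- ================= extraction: flows → (i) =================
  have support_ne : ∀ (f : Unit → (List (Fin n × Bool) →₀ ℝ)), G.Feasible f →
      (f ()).support.Nonempty := by
    intro f hf
    by_contra h
    rw [Finset.not_nonempty_iff_eq_empty] at h
    have := hf.2.2 ()
    rw [Finsupp.sum, h, Finset.sum_empty, hdemand] at this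
    norm_num at this
  have extract : ∀ (f : Unit → (List (Fin n × Bool) →₀ ℝ)), G.Feasible f →
      (∀ e, G.edgeFlow f e = 1/2) →
      ∀ p ∈ (f ()).support, G.pathCost f p = 3*B/2 →
      ∃ I : Finset (Fin n), ∑ i ∈ I, q i = B := by
    intro f hf hflow p hp hcostp
    obtain ⟨b, rfl⟩ := (hpath p).mp (hf.2.1 () p (Finsupp.mem_support_iff.mp hp))
    rw [hcost f hflow b] at hcostp
    refine ⟨Finset.univ.filter fun i => b i = true, ?_⟩
    have : (↑(∑ i ∈ Finset.univ.filter (fun i => b i = true), q i) : ℝ) = (B : ℝ) := by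
      push_cast
      linarith
    exact_mod_cast this
  have havg : ∀ (f : Unit → (List (Fin n × Bool) →₀ ℝ)), G.Feasible f →
      (∀ e, G.edgeFlow f e = 1/2) →
      (∑ p ∈ (f ()).support, f () p * G.pathCost f p) = 3*B/2 := by
    intro f hf hflow
    have := weighted_cost G f hf hsrc htgt hsource hsink hflow
    rw [Finsupp.sum] at this
    rw [this, hsc]
  have hsupsum : ∀ (f : Unit → (List (Fin n × Bool) →₀ ℝ)), G.Feasible f →
      (∑ p ∈ (f ()).support, f () p) = 1 := by
    intro f hf
    have := hf.2.2 ()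
    rw [Finsupp.sum, hdemand] at this
    exact this
  refine ⟨?_, ?_, ?_⟩
  -- ================ Part 1: socially optimal half flow ================
  · obtain ⟨hfeas, hflow⟩ := hflowpack (fun _ => true)
    refine ⟨flowOf n (fun _ => true), hfeas, hflow, ?_⟩
    intro g hg
    have h1 : G.socialCost (flowOf n (fun _ => true)) = 3*B/2 := by
      rw [RoutingInstance.socialCost]
      have : ∀ e : Fin n × Bool,
          G.edgeFlow (flowOf n (fun _ => true)) e
            * G.latency e (G.edgeFlow (flowOf n (fun _ => true)) e)
          = G.latency e (1/2) * (1/2) := by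
        intro e; rw [hflow e]; ring
      rw [Finset.sum_congr rfl fun e _ => this e, hsc]
    rw [h1, RoutingInstance.socialCost, Fintype.sum_prod_type]
    have h2 : ∀ i : Fin n, (3:ℝ)/4 * q i ≤
        ∑ c : Bool, G.edgeFlow g (i, c) * G.latency (i, c) (G.edgeFlow g (i, c)) := by
      intro i
      rw [Fintype.sum_bool]
      have hxb : 0 ≤ G.edgeFlow g (i, false) := edgeFlow_nonneg G g hg _
      have hxt : 0 ≤ G.edgeFlow g (i, true) := edgeFlow_nonneg G g hg _
      have hcons := stage_conservation G g hg hsrc htgt hsource hsink hdemand i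
      rw [hlatTop, hlatBot i _ hxb]
      have hq0 : (0:ℝ) ≤ q i := by positivity
      nlinarith [sq_nonneg (G.edgeFlow g (i, false) - 1/2)]
    calc (3:ℝ)*B/2 = ∑ i : Fin n, (3:ℝ)/4 * q i := by
          rw [← Finset.mul_sum, hqsum]; ring
      _ ≤ _ := Finset.sum_le_sum fun i _ => h2 i
  -- ================ Part 2: 1-EF ↔ partition ================
  · constructor
    · rintro ⟨I, hI⟩
      obtain ⟨f, hfeas, hflow, hcosts⟩ := main_dir I hI
      refine ⟨f, hfeas, hflow, ?_⟩
      intro k p r hp hr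
      rw [hcosts p hp, hcosts r hr, one_mul]
    · rintro ⟨f, hf, hflow, hEF⟩
      obtain ⟨p₀, hp₀⟩ := support_ne f hf
      have hu₀ : G.Used f () p₀ := hused f hf p₀ (Finsupp.mem_support_iff.mp hp₀)
      have hall : ∀ p ∈ (f ()).support, G.pathCost f p = G.pathCost f p₀ := by
        intro p hp
        have hu : G.Used f () p := hused f hf p (Finsupp.mem_support_iff.mp hp)
        have h1 := hEF () p p₀ hu hu₀
        have h2 := hEF () p₀ p hu₀ hu
        rw [one_mul] at h1 h2
        exact le_antisymm h1 h2
      have hW := havg f hf hflow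
      rw [Finset.sum_congr rfl (fun p hp => by rw [hall p hp]), ← Finset.sum_mul,
        hsupsum f hf, one_mul] at hW
      exact extract f hf hflow p₀ hp₀ hW
  -- ================ Part 3: (3/2)-UNE ↔ partition ================
  · constructor
    · rintro ⟨I, hI⟩
      obtain ⟨f, hfeas, hflow, hcosts⟩ := main_dir I hI
      refine ⟨f, hfeas, hflow, ?_⟩
      intro k p r hp hr
      obtain ⟨c, rfl⟩ := (hpath r).mp hr
      rw [hcosts p hp, hcost f hflow c]
      have := hSnonneg c
      have hB0 : (0:ℝ) ≤ B := by positivity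
      nlinarith
    · rintro ⟨f, hf, hflow, hUNE⟩
      have hbot : G.IsPathOf () (pathOf n fun _ => false) :=
        (hpath _).mpr ⟨_, rfl⟩
      have hbotcost : G.pathCost f (pathOf n fun _ => false) = B := by
        rw [hcost f hflow]
        have : (Finset.univ.filter fun i : Fin n => (false = true)) = ∅ := by
          ext i; simp
        rw [this]
        simp
      have hub : ∀ p ∈ (f ()).support, G.pathCost f p ≤ 3*B/2 := by
        intro p hp
        have := hUNE () p _ (hused f hf p (Finsupp.mem_support_iff.mp hp)) hbot
        rw [hbotcost] at this
        linarith
      have hW := havg f hf hflow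
      have hex : ∃ p ∈ (f ()).support, 3*B/2 ≤ G.pathCost f p := by
        by_contra h
        push_neg at h
        have hlt : (∑ p ∈ (f ()).support, f () p * G.pathCost f p)
            < ∑ p ∈ (f ()).support, f () p * (3*B/2) := by
          refine Finset.sum_lt_sum_of_nonempty (support_ne f hf) fun p hp => ?_
          exact mul_lt_mul_of_pos_left (h p hp)
            (hused f hf p (Finsupp.mem_support_iff.mp hp))
        rw [← Finset.sum_mul, hsupsum f hf, one_mul, hW] at hlt
        exact lt_irrefl _ hlt
      obtain ⟨p₁, hp₁, hge⟩ := hex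
      exact extract f hf hflow p₁ hp₁ (le_antisymm (hub p₁ hp₁) hge)
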